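/- Let Λ ⊂ ℝ^n be a full-rank lattice with covolume V(Λ), and let σ_s > 0. Then for every ε > 0, the set {t ∈ ℝ^n : f_{σ_s}(Λ+t) ≤ ε/V(Λ)} has measure at most ε under the Gaussian measure N(0, σ_s² I_n). -/

import Mathlib

open MeasureTheory Real Filter Pointwise
open scoped ENNReal RealInnerProductSpace

noncomputable section

/-- The (continuous) Gaussian density with parameter `σ` on `ℝⁿ`:
`f_σ(x) = (2πσ²)^{-n/2} exp(-‖x‖²/(2σ²))`. -/
def gaussF (n : ℕ) (σ : ℝ) (x : EuclideanSpace ℝ (Fin n)) : ℝ :=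
  (2 * π * σ ^ 2) ^ (-(n : ℝ) / 2) * Real.exp (-‖x‖ ^ 2 / (2 * σ ^ 2))

/-- The Gaussian mass `f_σ(S) = Σ_{y ∈ S} f_σ(y)` of a (countable) set `S ⊆ ℝⁿ`. -/
def gaussMass (n : ℕ) (σ : ℝ) (S : Set (EuclideanSpace ℝ (Fin n))) : ℝ :=
  ∑' y : S, gaussF n σ y

/-- The Gaussian measure `N(0, σ² Iₙ)` on `ℝⁿ`, given by its density w.r.t. Lebesgue measure. -/
def gaussMeasure (n : ℕ) (σ : ℝ) : Measure (EuclideanSpace ℝ (Fin n)) :=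
  volume.withDensity fun x => ENNReal.ofReal (gaussF n σ x)

/-- The coset `S + t` of a set `S ⊆ ℝⁿ`, i.e. `{x | x - t ∈ S}`. -/
def coset (n : ℕ) (S : Set (EuclideanSpace ℝ (Fin n))) (t : EuclideanSpace ℝ (Fin n)) :
    Set (EuclideanSpace ℝ (Fin n)) := {x | x - t ∈ S}

/-- The Voronoi cell of `S`: `{x | ⟪x,y⟫ ≤ ‖y‖²/2 for all y ∈ S}`. -/
def voronoi (n : ℕ) (S : Set (EuclideanSpace ℝ (Fin n))) : Set (EuclideanSpace ℝ (Fin n)) :=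
  {x | ∀ y ∈ S, ⟪x, y⟫ ≤ ‖y‖ ^ 2 / 2}

/-- The inverse error function `err⁻¹_ε(Λ)`: the least `s > 0` such that a standard Gaussian
leaves `s · V(Λ)` with probability at most `ε`. -/
def errInv (n : ℕ) (ε : ℝ) (S : Set (EuclideanSpace ℝ (Fin n))) : ℝ :=
  sInf {s : ℝ | 0 < s ∧ gaussMeasure n 1 ((s • voronoi n S)ᶜ) ≤ ENNReal.ofReal ε}

/-- The Shannon entropy (in nats) of the discrete Gaussian `D_{S,σ}` supported on `S`,
which assigns mass `f_σ(y)/f_σ(S)` to each `y ∈ S`. -/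
def dgEntropy (n : ℕ) (σ : ℝ) (S : Set (EuclideanSpace ℝ (Fin n))) : ℝ :=
  -∑' y : S, (gaussF n σ y / gaussMass n σ S) * Real.log (gaussF n σ y / gaussMass n σ S)

/-- The flatness factor `ε_Λ(σ) = sup_{x ∈ V(Λ)} |V(Λ)·f_σ(Λ+x) − 1|`. -/
def flatness (n : ℕ) (L : Submodule ℤ (EuclideanSpace ℝ (Fin n))) (σ : ℝ) : ℝ :=
  ⨆ x : voronoi n (L : Set (EuclideanSpace ℝ (Fin n))),
    |ZLattice.covolume L volume *
        gaussMass n σ (coset n (L : Set (EuclideanSpace ℝ (Fin n))) x) - 1|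

lemma gaussF_nonneg (n : ℕ) (σ : ℝ) (x : EuclideanSpace ℝ (Fin n)) : 0 ≤ gaussF n σ x :=
  mul_nonneg (Real.rpow_nonneg (by positivity) _) (Real.exp_nonneg _)

lemma gaussF_continuous (n : ℕ) (σ : ℝ) : Continuous (gaussF n σ) := by
  unfold gaussF
  exact continuous_const.mul
    (Real.continuous_exp.comp (((continuous_norm.pow 2).neg).div_const _))

lemma gaussF_integrable (n : ℕ) {σ : ℝ} (hσ : 0 < σ) : Integrable (gaussF n σ) := by
  have hb : (0:ℝ) < 1/(2*σ^2) := by positivity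
  have h := (GaussianFourier.integrable_cexp_neg_mul_sq_norm_add (V := EuclideanSpace ℝ (Fin n))
      (b := ((1/(2*σ^2) : ℝ) : ℂ)) (by rw [Complex.ofReal_re]; exact hb) 0 0).norm
  refine (h.const_mul ((2 * π * σ ^ 2) ^ (-(n : ℝ) / 2))).congr ?_
  filter_upwards with v
  rw [Complex.norm_exp, gaussF]
  have h2 : (-(((1 / (2 * σ ^ 2) : ℝ)) : ℂ) * (‖v‖ : ℂ) ^ 2) = ((-‖v‖ ^ 2 / (2 * σ ^ 2) : ℝ) : ℂ) := by
    push_cast; ring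
  simp only [zero_mul, add_zero, h2, Complex.ofReal_re]

lemma gaussMass_coset (n : ℕ) (σ : ℝ) (L : Submodule ℤ (EuclideanSpace ℝ (Fin n)))
    (t : EuclideanSpace ℝ (Fin n)) :
    gaussMass n σ (coset n (L : Set (EuclideanSpace ℝ (Fin n))) t)
      = ∑' ℓ : L, gaussF n σ (ℓ + t) := by
  let e : L ≃ coset n (L : Set (EuclideanSpace ℝ (Fin n))) t :=
  { toFun := fun ℓ => ⟨(ℓ : EuclideanSpace ℝ (Fin n)) + t, by
      simp [coset, SetLike.mem_coe, ℓ.2]⟩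
    invFun := fun y => ⟨y.1 - t, y.2⟩
    left_inv := fun ℓ => Subtype.ext (by simp)
    right_inv := fun y => Subtype.ext (by simp) }
  exact (Equiv.tsum_eq e (fun y => gaussF n σ y)).symm

lemma tsum_shift (n : ℕ) (σ : ℝ) (L : Submodule ℤ (EuclideanSpace ℝ (Fin n)))
    (g : L) (t : EuclideanSpace ℝ (Fin n)) :
    (∑' ℓ : L, gaussF n σ (ℓ + ((g : EuclideanSpace ℝ (Fin n)) + t)))
      = ∑' ℓ : L, gaussF n σ (ℓ + t) := by
  calc (∑' ℓ : L, gaussF n σ ((ℓ : EuclideanSpace ℝ (Fin n)) + ((g : EuclideanSpace ℝ (Fin n)) + t)))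
      = ∑' ℓ : L, gaussF n σ (((ℓ + g : L) : EuclideanSpace ℝ (Fin n)) + t) := by
        refine tsum_congr fun ℓ => ?_
        congr 1
        push_cast
        abel
    _ = _ := (Equiv.addRight g).tsum_eq (fun ℓ : L => gaussF n σ ((ℓ : EuclideanSpace ℝ (Fin n)) + t))

/-- the Gaussian mass of a shifted lattice coset is unlikely to be small:
the set of shifts `t` with `f_{σ_s}(Λ+t) ≤ ε/V(Λ)` has Gaussian measure at most `ε`. -/
theorem gaussian_mass_lower_bound (n : ℕ) (L : Submodule ℤ (EuclideanSpace ℝ (Fin n)))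
    [DiscreteTopology L] [IsZLattice ℝ L]
    (σs : ℝ) (hσs : 0 < σs) (ε : ℝ) (hε : 0 < ε) :
    gaussMeasure n σs {t : EuclideanSpace ℝ (Fin n) |
      gaussMass n σs (coset n (L : Set (EuclideanSpace ℝ (Fin n))) t) ≤ ε / ZLattice.covolume L volume}
      ≤ ENNReal.ofReal ε := by
  classical
  unfold gaussMeasure
  set V := ZLattice.covolume L volume with hVdef
  have hV : 0 < V := ZLattice.covolume_pos L volume
  set Φ : L → EuclideanSpace ℝ (Fin n) → ℝ≥0∞ :=
    fun g t => ENNReal.ofReal (gaussF n σs ((g : EuclideanSpace ℝ (Fin n)) + t)) with hΦ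
  set M : EuclideanSpace ℝ (Fin n) → ℝ≥0∞ := fun t => ∑' g : L, Φ g t with hM
  have hΦm : ∀ g : L, Measurable (Φ g) := fun g =>
    (((gaussF_continuous n σs).comp (continuous_const.add continuous_id)).measurable).ennreal_ofReal
  have hMm : Measurable M := Measurable.ennreal_tsum hΦm
  have hmass : ∀ t, gaussMass n σs (coset n (L : Set (EuclideanSpace ℝ (Fin n))) t)
      = (M t).toReal := by
    intro t
    rw [gaussMass_coset]
    by_cases hs : Summable (fun ℓ : L => gaussF n σs ((ℓ : EuclideanSpace ℝ (Fin n)) + t))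
    · rw [show M t = ENNReal.ofReal (∑' ℓ : L, gaussF n σs ((ℓ : EuclideanSpace ℝ (Fin n)) + t))
        from (ENNReal.ofReal_tsum_of_nonneg (fun _ => gaussF_nonneg _ _ _) hs).symm,
        ENNReal.toReal_ofReal (tsum_nonneg fun _ => gaussF_nonneg _ _ _)]
    · rw [tsum_eq_zero_of_not_summable hs]
      have htop : M t = ⊤ := by
        by_contra h
        exact hs ((ENNReal.summable_toReal h).congr fun ℓ => by
          simp [hΦ, ENNReal.toReal_ofReal (gaussF_nonneg _ _ _)])
      rw [htop]; simp
  set A := {t : EuclideanSpace ℝ (Fin n) |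
      gaussMass n σs (coset n (L : Set (EuclideanSpace ℝ (Fin n))) t) ≤ ε / V} with hA
  have hAm : MeasurableSet A := by
    have : A = {t | (M t).toReal ≤ ε / V} := Set.ext fun t => by
      simp only [hA, Set.mem_setOf_eq, hmass t]
    rw [this]
    exact measurableSet_le hMm.ennreal_toReal measurable_const
  have hAper : ∀ (g : L) (t : EuclideanSpace ℝ (Fin n)),
      ((g : EuclideanSpace ℝ (Fin n)) + t ∈ A ↔ t ∈ A) := by
    intro g t
    simp only [hA, Set.mem_setOf_eq, gaussMass_coset]
    rw [tsum_shift]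
  obtain b := Module.Free.chooseBasis ℤ L
  set F := ZSpan.fundamentalDomain (b.ofZLatticeBasis ℝ) with hF
  have hFd : IsAddFundamentalDomain L F volume := ZLattice.isAddFundamentalDomain b volume
  have hFvol : volume F = ENNReal.ofReal V := by
    have h1 : V = (volume F).toReal := ZLattice.covolume_eq_measure_fundamentalDomain L volume hFd
    have h2 : volume F ≠ ⊤ := ((ZSpan.fundamentalDomain_isBounded _).measure_lt_top).ne
    rw [h1, ENNReal.ofReal_toReal h2]
  have hvadd : ∀ (g : L) (x : EuclideanSpace ℝ (Fin n)),
      g +ᵥ x = (g : EuclideanSpace ℝ (Fin n)) + x := fun _ _ => rfl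
  haveI : MeasurableVAdd (↥L) (EuclideanSpace ℝ (Fin n)) :=
    { measurable_const_vadd := fun g => (measurable_const_add (g : EuclideanSpace ℝ (Fin n)))
      measurable_vadd_const := fun x => ((continuous_subtype_val.add continuous_const).measurable) }
  haveI : VAddInvariantMeasure (↥L) (EuclideanSpace ℝ (Fin n)) volume :=
    ⟨fun g s _ => measure_preimage_add volume (g : EuclideanSpace ℝ (Fin n)) s⟩
  have key : (volume.withDensity fun x => ENNReal.ofReal (gaussF n σs x)) A
      = ∫⁻ x in F, A.indicator M x := by
    rw [withDensity_apply _ hAm, ← lintegral_indicator hAm,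
      hFd.lintegral_eq_tsum'' (A.indicator fun x => ENNReal.ofReal (gaussF n σs x))]
    calc (∑' g : L, ∫⁻ x in F, A.indicator (fun y => ENNReal.ofReal (gaussF n σs y)) (g +ᵥ x))
        = ∑' g : L, ∫⁻ x in F, A.indicator (fun y => Φ g y) x := by
          refine tsum_congr fun g => lintegral_congr fun x => ?_
          rw [hvadd]
          by_cases hx : x ∈ A
          · rw [Set.indicator_of_mem ((hAper g x).mpr hx), Set.indicator_of_mem hx]
          · rw [Set.indicator_of_notMem (fun h => hx ((hAper g x).mp h)),
              Set.indicator_of_notMem hx]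
      _ = ∫⁻ x in F, ∑' g : L, A.indicator (fun y => Φ g y) x :=
          (lintegral_tsum fun g => ((hΦm g).indicator hAm).aemeasurable).symm
      _ = ∫⁻ x in F, A.indicator M x := by
          refine lintegral_congr fun x => ?_
          by_cases hx : x ∈ A
          · simp only [Set.indicator_of_mem hx]; rfl
          · simp only [Set.indicator_of_notMem hx, tsum_zero]
  have hfin : ∫⁻ x in F, M x ≠ ⊤ := by
    have heq : ∫⁻ x in F, M x = ∫⁻ x, ENNReal.ofReal (gaussF n σs x) := by
      rw [lintegral_tsum (fun g => (hΦm g).aemeasurable),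
        hFd.lintegral_eq_tsum'' (fun x => ENNReal.ofReal (gaussF n σs x))]
      rfl
    rw [heq]
    exact ((gaussF_integrable n hσs).lintegral_lt_top).ne
  have hae : ∀ᵐ x ∂(volume.restrict F), M x < ⊤ := ae_lt_top hMm hfin
  have hbound : ∫⁻ x in F, A.indicator M x ≤ ∫⁻ x in F, ENNReal.ofReal (ε / V) := by
    refine lintegral_mono_ae (hae.mono fun x hx => ?_)
    by_cases hxA : x ∈ A
    · rw [Set.indicator_of_mem hxA]
      have hsum : Summable (fun ℓ : L => gaussF n σs ((ℓ : EuclideanSpace ℝ (Fin n)) + x)) := by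
        refine (ENNReal.summable_toReal hx.ne).congr fun ℓ => ?_
        simp [hΦ, ENNReal.toReal_ofReal (gaussF_nonneg _ _ _)]
      have h1 : M x = ENNReal.ofReal (gaussMass n σs (coset n (L : Set (EuclideanSpace ℝ (Fin n))) x)) := by
        rw [gaussMass_coset, ENNReal.ofReal_tsum_of_nonneg (fun _ => gaussF_nonneg _ _ _) hsum]
      rw [h1]
      exact ENNReal.ofReal_le_ofReal hxA
    · rw [Set.indicator_of_notMem hxA]; exact zero_le
  calc (volume.withDensity fun x => ENNReal.ofReal (gaussF n σs x)) A
      = ∫⁻ x in F, A.indicator M x := key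
    _ ≤ ∫⁻ _x in F, ENNReal.ofReal (ε / V) := hbound
    _ = ENNReal.ofReal (ε / V) * volume F := setLIntegral_const _ _
    _ = ENNReal.ofReal (ε / V) * ENNReal.ofReal V := by rw [hFvol]
    _ = ENNReal.ofReal (ε / V * V) := (ENNReal.ofReal_mul (by positivity)).symm
    _ = ENNReal.ofReal ε := by rw [div_mul_cancel₀ _ hV.ne']
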